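/- Let F be a free group and R, S normal subgroups of F. Suppose x, y ∈ R∩S, m ≥ 2, x^m = x₁x₂ and y^m = y₁y₂ with x₁, y₁ ∈ R'∩S and x₂, y₂ ∈ R∩S'. Then [x₁,y]·[x,y₂]⁻¹ − 1 ∈ 𝔯𝔣𝔰; in particular the element [x₁,y]·[x,y₂]⁻¹ lies in F ∩ (1 + 𝔯𝔣𝔰). -/

import Mathlib

open MonoidAlgebra

/-- For a subgroup `G` of `F`, the two-sided ideal of the integral group ring `ℤ[F]`
generated by `{g - 1 : g ∈ G}`, realized as the `ℤ`-span of `{f₁ (g-1) f₂}`. -/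
noncomputable def relIdeal (F : Type) [Group F] (G : Subgroup F) : Submodule ℤ (MonoidAlgebra ℤ F) :=
  Submodule.span ℤ {x | ∃ f₁ f₂ : F, ∃ g ∈ G, x = of ℤ F f₁ * (of ℤ F g - 1) * of ℤ F f₂}

namespace Stmt4Aux

variable {F : Type} [Group F]

noncomputable def dd (g : F) : MonoidAlgebra ℤ F := of ℤ F g - 1

theorem dd_one : dd (1 : F) = 0 := by rw [dd, map_one, sub_self]

theorem dd_mul (a b : F) : dd (a * b) = dd a * of ℤ F b + dd b := by
  simp only [dd, map_mul]; noncomm_ring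

theorem dd_mul' (a b : F) : dd (a * b) = of ℤ F a * dd b + dd a := by
  simp only [dd, map_mul]; noncomm_ring

theorem dd_inv (a : F) : dd a⁻¹ = -(dd a * of ℤ F a⁻¹) := by
  simp only [dd, sub_mul, one_mul, ← map_mul, mul_inv_cancel, map_one]
  noncomm_ring

theorem dd_mem {G : Subgroup F} {g : F} (hg : g ∈ G) : dd g ∈ relIdeal F G :=
  Submodule.subset_span ⟨1, 1, g, hg, by rw [map_one, one_mul, mul_one, dd]⟩

theorem dd_mem_top (g : F) : dd g ∈ relIdeal F (⊤ : Subgroup F) := dd_mem trivial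

theorem relIdeal_mono {G H : Subgroup F} (h : G ≤ H) : relIdeal F G ≤ relIdeal F H := by
  apply Submodule.span_mono
  rintro a ⟨f₁, f₂, g, hg, rfl⟩
  exact ⟨f₁, f₂, g, h hg, rfl⟩

theorem relIdeal_mul_of {G : Subgroup F} {a : MonoidAlgebra ℤ F} (ha : a ∈ relIdeal F G)
    (f : F) : a * of ℤ F f ∈ relIdeal F G := by
  induction ha using Submodule.span_induction with
  | mem z hz =>
      obtain ⟨f₁, f₂, g, hg, rfl⟩ := hz
      refine Submodule.subset_span ⟨f₁, f₂ * f, g, hg, ?_⟩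
      rw [map_mul]; noncomm_ring
  | zero => simp
  | add u v _ _ hu hv => rw [add_mul]; exact add_mem hu hv
  | smul r u _ hu => rw [smul_mul_assoc]; exact Submodule.smul_mem _ _ hu

theorem of_mul_relIdeal {G : Subgroup F} {a : MonoidAlgebra ℤ F} (ha : a ∈ relIdeal F G)
    (f : F) : of ℤ F f * a ∈ relIdeal F G := by
  induction ha using Submodule.span_induction with
  | mem z hz =>
      obtain ⟨f₁, f₂, g, hg, rfl⟩ := hz
      refine Submodule.subset_span ⟨f * f₁, f₂, g, hg, ?_⟩
      rw [map_mul]; noncomm_ring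
  | zero => simp
  | add u v _ _ hu hv => rw [mul_add]; exact add_mem hu hv
  | smul r u _ hu => rw [mul_smul_comm]; exact Submodule.smul_mem _ _ hu

theorem right_stable_mul {M N : Submodule ℤ (MonoidAlgebra ℤ F)}
    (hN : ∀ (f : F) (a : MonoidAlgebra ℤ F), a ∈ N → a * of ℤ F f ∈ N)
    (f : F) {a : MonoidAlgebra ℤ F} (ha : a ∈ M * N) : a * of ℤ F f ∈ M * N :=
  Submodule.mul_induction_on ha
    (fun p hp q hq => by rw [mul_assoc]; exact Submodule.mul_mem_mul hp (hN f q hq))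
    (fun u v hu hv => by rw [add_mul]; exact add_mem hu hv)

theorem left_stable_mul {M N : Submodule ℤ (MonoidAlgebra ℤ F)}
    (hM : ∀ (f : F) (a : MonoidAlgebra ℤ F), a ∈ M → of ℤ F f * a ∈ M)
    (f : F) {a : MonoidAlgebra ℤ F} (ha : a ∈ M * N) : of ℤ F f * a ∈ M * N :=
  Submodule.mul_induction_on ha
    (fun p hp q hq => by rw [← mul_assoc]; exact Submodule.mul_mem_mul (hM f p hp) hq)
    (fun u v hu hv => by rw [mul_add]; exact add_mem hu hv)

/-- commutator expansion identity -/
theorem comm_aux {A : Type} [Ring A] (u a b : A) (h : u * b * a = 1) :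
    u * a * b - 1 = u * (a - 1) * (b - 1) - u * (b - 1) * (a - 1) := by
  have e : u * (a - 1) * (b - 1) - u * (b - 1) * (a - 1) = u * a * b - u * b * a := by
    noncomm_ring
  rw [e, h]

theorem key1_id {A : Type} [Ring A] (n : ℕ) (u v c : A) :
    u * (v * c + (c - 1)) - (n + 1) • (u * (c - 1))
      = (u * v - n • (u * (c - 1))) * c + n • (u * (c - 1) * (c - 1)) := by
  noncomm_ring
  module

theorem key2_id {A : Type} [Ring A] (n : ℕ) (c v u : A) :
    (c * v + (c - 1)) * u - (n + 1) • ((c - 1) * u)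
      = c * (v * u - n • ((c - 1) * u)) + n • ((c - 1) * (c - 1) * u) := by
  noncomm_ring
  module

theorem heq2_id {A : Type} [Ring A] (m : ℕ) (p a b c e : A) :
    p * a * (b * c + (c - 1)) - m • (p * a * e)
      = p * (a * b - m • (a * e)) * c + m • (p * a * e * (c - 1)) + p * a * (c - 1) := by
  noncomm_ring
  module

theorem heq4_id {A : Type} [Ring A] (m : ℕ) (q r b a e : A) :
    q * (r * b + (r - 1)) * e - m • (q * r * a * e)
      = q * r * (b * e - m • (a * e)) + q * (r - 1) * e := by
  noncomm_ring

theorem final_id {A : Type} [Ring A] (m : ℕ) (e1 e2 e3 e4 p1 p3 dy dx : A) :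
    (e1 - e2) - (e3 - e4)
      = (e1 - e3 - (e2 - m • (p1 * dy * dx)) + (e4 - m • (p3 * dy * dx)))
        + m • ((p3 - p1) * dy * dx) := by
  noncomm_ring
  module

open scoped commutatorElement in
theorem dd_mem_sq {G : Subgroup F} {g : F} (hg : g ∈ ⁅G, G⁆) :
    dd g ∈ relIdeal F G * relIdeal F G := by
  rw [Subgroup.commutator_def] at hg
  induction hg using Subgroup.closure_induction with
  | mem z hz =>
      obtain ⟨p, hp, q, hq, rfl⟩ := hz
      have h2 : of ℤ F (p * q) * of ℤ F q⁻¹ * of ℤ F p⁻¹ = 1 := by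
        rw [← map_mul, ← map_mul]
        have : p * q * q⁻¹ * p⁻¹ = 1 := by group
        rw [this, map_one]
      have h3 : of ℤ F ⁅p, q⁆ = of ℤ F (p * q) * of ℤ F p⁻¹ * of ℤ F q⁻¹ := by
        rw [← map_mul, ← map_mul]; congr 1
      have h4 : dd ⁅p, q⁆ =
          of ℤ F (p * q) * dd p⁻¹ * dd q⁻¹ - of ℤ F (p * q) * dd q⁻¹ * dd p⁻¹ := by
        simp only [dd, h3]
        exact comm_aux _ _ _ h2
      rw [h4]
      exact sub_mem
        (Submodule.mul_mem_mul (of_mul_relIdeal (dd_mem (inv_mem hp)) _) (dd_mem (inv_mem hq)))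
        (Submodule.mul_mem_mul (of_mul_relIdeal (dd_mem (inv_mem hq)) _) (dd_mem (inv_mem hp)))
  | one => rw [dd_one]; exact zero_mem _
  | mul u v _ _ hu hv =>
      rw [dd_mul]
      exact add_mem (right_stable_mul (fun f a ha => relIdeal_mul_of ha f) v hu) hv
  | inv u _ hu =>
      rw [dd_inv]
      exact neg_mem (right_stable_mul (fun f a ha => relIdeal_mul_of ha f) u⁻¹ hu)

theorem T_left {R S : Subgroup F} (f : F) {a : MonoidAlgebra ℤ F}
    (ha : a ∈ relIdeal F R * relIdeal F ⊤ * relIdeal F S) :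
    of ℤ F f * a ∈ relIdeal F R * relIdeal F ⊤ * relIdeal F S :=
  left_stable_mul (fun g b hb => left_stable_mul (fun h c hc => of_mul_relIdeal hc h) g hb) f ha

theorem T_right {R S : Subgroup F} (f : F) {a : MonoidAlgebra ℤ F}
    (ha : a ∈ relIdeal F R * relIdeal F ⊤ * relIdeal F S) :
    a * of ℤ F f ∈ relIdeal F R * relIdeal F ⊤ * relIdeal F S :=
  right_stable_mul (fun g b hb => relIdeal_mul_of hb g) f ha

theorem key1 {R S : Subgroup F} {y x : F} (hy : y ∈ R) (hx : x ∈ S) (m : ℕ) :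
    dd y * dd (x ^ m) - m • (dd y * dd x) ∈ relIdeal F R * relIdeal F ⊤ * relIdeal F S := by
  induction m with
  | zero => simp only [pow_zero, dd_one, mul_zero, zero_smul, sub_zero]; exact zero_mem _
  | succ n ih =>
      have heq : dd y * dd (x ^ (n + 1)) - (n + 1) • (dd y * dd x) =
          (dd y * dd (x ^ n) - n • (dd y * dd x)) * of ℤ F x
            + n • (dd y * dd x * dd x) := by
        rw [pow_succ, dd_mul]
        simp only [dd]
        exact key1_id n _ _ _
      rw [heq]
      exact add_mem (T_right x ih)
        (nsmul_mem (Submodule.mul_mem_mul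
          (Submodule.mul_mem_mul (dd_mem hy) (dd_mem_top x)) (dd_mem hx)) n)

theorem key2 {R S : Subgroup F} {y x : F} (hy : y ∈ R) (hx : x ∈ S) (m : ℕ) :
    dd (y ^ m) * dd x - m • (dd y * dd x) ∈ relIdeal F R * relIdeal F ⊤ * relIdeal F S := by
  induction m with
  | zero => simp only [pow_zero, dd_one, zero_mul, zero_smul, sub_zero]; exact zero_mem _
  | succ n ih =>
      have heq : dd (y ^ (n + 1)) * dd x - (n + 1) • (dd y * dd x) =
          of ℤ F y * (dd (y ^ n) * dd x - n • (dd y * dd x))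
            + n • (dd y * dd y * dd x) := by
        rw [pow_succ', dd_mul']
        simp only [dd]
        exact key2_id n _ _ _
      rw [heq]
      exact add_mem (T_left y ih)
        (nsmul_mem (Submodule.mul_mem_mul
          (Submodule.mul_mem_mul (dd_mem hy) (dd_mem_top y)) (dd_mem hx)) n)

end Stmt4Aux

set_option maxHeartbeats 2000000 in
open Stmt4Aux in
theorem stmt4 (F : Type) [Group F] [IsFreeGroup F] (R S : Subgroup F)
    [R.Normal] [S.Normal] (x y x₁ x₂ y₁ y₂ : F) (m : ℕ) (hm : 2 ≤ m)
    (hx : x ∈ R ⊓ S) (hy : y ∈ R ⊓ S)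
    (hx₁ : x₁ ∈ ⁅R, R⁆ ⊓ S) (hy₁ : y₁ ∈ ⁅R, R⁆ ⊓ S)
    (hx₂ : x₂ ∈ R ⊓ ⁅S, S⁆) (hy₂ : y₂ ∈ R ⊓ ⁅S, S⁆)
    (hxm : x ^ m = x₁ * x₂) (hym : y ^ m = y₁ * y₂) :
    of ℤ F ((x₁⁻¹ * y⁻¹ * x₁ * y) * (x⁻¹ * y₂⁻¹ * x * y₂)⁻¹) - 1 ∈
      relIdeal F R * relIdeal F ⊤ * relIdeal F S := by
  obtain ⟨hxR, hxS⟩ := hx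
  obtain ⟨hyR, hyS⟩ := hy
  obtain ⟨hx₁R', hx₁S⟩ := hx₁
  obtain ⟨hy₁R', hy₁S⟩ := hy₁
  obtain ⟨hx₂R, hx₂S'⟩ := hx₂
  obtain ⟨hy₂R, hy₂S'⟩ := hy₂
  have hx₁R : x₁ ∈ R := Subgroup.commutator_le_left R R hx₁R'
  have hy₁R : y₁ ∈ R := Subgroup.commutator_le_left R R hy₁R'
  have hx₂S : x₂ ∈ S := Subgroup.commutator_le_left S S hx₂S'
  have hy₂S : y₂ ∈ S := Subgroup.commutator_le_left S S hy₂S'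
  have hx1e : x₁ = x ^ m * x₂⁻¹ := by rw [hxm, mul_inv_cancel_right]
  have hy2e : y₂ = y₁⁻¹ * y ^ m := by rw [hym, inv_mul_cancel_left]
  -- Step A: reduce to difference of the two commutators
  have hstep : of ℤ F ((x₁⁻¹ * y⁻¹ * x₁ * y) * (x⁻¹ * y₂⁻¹ * x * y₂)⁻¹) - 1
      = (of ℤ F (x₁⁻¹ * y⁻¹ * x₁ * y) - of ℤ F (x⁻¹ * y₂⁻¹ * x * y₂))
          * of ℤ F (x⁻¹ * y₂⁻¹ * x * y₂)⁻¹ := by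
    have hc : of ℤ F (x⁻¹ * y₂⁻¹ * x * y₂) * of ℤ F (x⁻¹ * y₂⁻¹ * x * y₂)⁻¹ = 1 := by
      rw [← map_mul, mul_inv_cancel, map_one]
    rw [map_mul, sub_mul, hc]
  rw [hstep]
  refine T_right _ ?_
  -- commutator expansions
  have hC1 : of ℤ F (x₁⁻¹ * y⁻¹ * x₁ * y) - 1
      = of ℤ F (x₁⁻¹ * y⁻¹) * dd x₁ * dd y - of ℤ F (x₁⁻¹ * y⁻¹) * dd y * dd x₁ := by
    have e2 : of ℤ F (x₁⁻¹ * y⁻¹) * of ℤ F y * of ℤ F x₁ = 1 := by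
      rw [← map_mul, ← map_mul]
      have : x₁⁻¹ * y⁻¹ * y * x₁ = 1 := by group
      rw [this, map_one]
    have e3 : of ℤ F (x₁⁻¹ * y⁻¹ * x₁ * y)
        = of ℤ F (x₁⁻¹ * y⁻¹) * of ℤ F x₁ * of ℤ F y := by rw [← map_mul, ← map_mul]
    rw [e3]; simp only [dd]; exact comm_aux _ _ _ e2
  have hC2 : of ℤ F (x⁻¹ * y₂⁻¹ * x * y₂) - 1
      = of ℤ F (x⁻¹ * y₂⁻¹) * dd x * dd y₂ - of ℤ F (x⁻¹ * y₂⁻¹) * dd y₂ * dd x := by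
    have e2 : of ℤ F (x⁻¹ * y₂⁻¹) * of ℤ F y₂ * of ℤ F x = 1 := by
      rw [← map_mul, ← map_mul]
      have : x⁻¹ * y₂⁻¹ * y₂ * x = 1 := by group
      rw [this, map_one]
    have e3 : of ℤ F (x⁻¹ * y₂⁻¹ * x * y₂)
        = of ℤ F (x⁻¹ * y₂⁻¹) * of ℤ F x * of ℤ F y₂ := by rw [← map_mul, ← map_mul]
    rw [e3]; simp only [dd]; exact comm_aux _ _ _ e2
  -- memberships for the four pieces
  have hE1 : of ℤ F (x₁⁻¹ * y⁻¹) * dd x₁ * dd y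
      ∈ relIdeal F R * relIdeal F ⊤ * relIdeal F S := by
    have h1 : of ℤ F (x₁⁻¹ * y⁻¹) * dd x₁ ∈ relIdeal F R * relIdeal F ⊤ :=
      mul_le_mul' le_rfl (relIdeal_mono le_top)
        (left_stable_mul (fun f a ha => of_mul_relIdeal ha f) _ (dd_mem_sq hx₁R'))
    exact Submodule.mul_mem_mul h1 (dd_mem hyS)
  have hE3 : of ℤ F (x⁻¹ * y₂⁻¹) * dd x * dd y₂
      ∈ relIdeal F R * relIdeal F ⊤ * relIdeal F S := by
    have h1 : of ℤ F (x⁻¹ * y₂⁻¹) * dd x ∈ relIdeal F R := of_mul_relIdeal (dd_mem hxR) _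
    have h2 : dd y₂ ∈ relIdeal F ⊤ * relIdeal F S :=
      mul_le_mul' (relIdeal_mono le_top) le_rfl (dd_mem_sq hy₂S')
    rw [mul_assoc (relIdeal F R)]
    exact Submodule.mul_mem_mul h1 h2
  have hE2 : of ℤ F (x₁⁻¹ * y⁻¹) * dd y * dd x₁
        - m • (of ℤ F (x₁⁻¹ * y⁻¹) * dd y * dd x)
      ∈ relIdeal F R * relIdeal F ⊤ * relIdeal F S := by
    have hdx₁ : dd x₁ = dd (x ^ m) * of ℤ F x₂⁻¹ + dd x₂⁻¹ := by
      rw [hx1e]; exact dd_mul _ _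
    have heq : of ℤ F (x₁⁻¹ * y⁻¹) * dd y * dd x₁
          - m • (of ℤ F (x₁⁻¹ * y⁻¹) * dd y * dd x)
        = of ℤ F (x₁⁻¹ * y⁻¹) * (dd y * dd (x ^ m) - m • (dd y * dd x)) * of ℤ F x₂⁻¹
          + m • (of ℤ F (x₁⁻¹ * y⁻¹) * dd y * dd x * dd x₂⁻¹)
          + of ℤ F (x₁⁻¹ * y⁻¹) * dd y * dd x₂⁻¹ := by
      rw [hdx₁]; simp only [dd]; exact heq2_id m _ _ _ _ _
    rw [heq]
    refine add_mem (add_mem ?_ ?_) ?_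
    · exact T_right _ (T_left _ (key1 hyR hxS m))
    · exact nsmul_mem (Submodule.mul_mem_mul (Submodule.mul_mem_mul
        (of_mul_relIdeal (dd_mem hyR) _) (dd_mem_top x)) (dd_mem (inv_mem hx₂S))) m
    · have h1 : of ℤ F (x₁⁻¹ * y⁻¹) * dd y ∈ relIdeal F R := of_mul_relIdeal (dd_mem hyR) _
      have h2 : dd x₂⁻¹ ∈ relIdeal F ⊤ * relIdeal F S :=
        mul_le_mul' (relIdeal_mono le_top) le_rfl (dd_mem_sq (inv_mem hx₂S'))
      rw [mul_assoc (relIdeal F R)]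
      exact Submodule.mul_mem_mul h1 h2
  have hE4 : of ℤ F (x⁻¹ * y₂⁻¹) * dd y₂ * dd x
        - m • (of ℤ F (x⁻¹ * y₂⁻¹ * y₁⁻¹) * dd y * dd x)
      ∈ relIdeal F R * relIdeal F ⊤ * relIdeal F S := by
    have hdy₂ : dd y₂ = of ℤ F y₁⁻¹ * dd (y ^ m) + dd y₁⁻¹ := by
      rw [hy2e]; exact dd_mul' _ _
    have hP3 : of ℤ F (x⁻¹ * y₂⁻¹ * y₁⁻¹) = of ℤ F (x⁻¹ * y₂⁻¹) * of ℤ F y₁⁻¹ := by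
      rw [← map_mul]
    have heq : of ℤ F (x⁻¹ * y₂⁻¹) * dd y₂ * dd x
          - m • (of ℤ F (x⁻¹ * y₂⁻¹ * y₁⁻¹) * dd y * dd x)
        = of ℤ F (x⁻¹ * y₂⁻¹ * y₁⁻¹) * (dd (y ^ m) * dd x - m • (dd y * dd x))
          + of ℤ F (x⁻¹ * y₂⁻¹) * dd y₁⁻¹ * dd x := by
      rw [hdy₂, hP3]; simp only [dd]; exact heq4_id m _ _ _ _ _
    rw [heq]
    refine add_mem (T_left _ (key2 hyR hxS m)) ?_
    have h1 : of ℤ F (x⁻¹ * y₂⁻¹) * dd y₁⁻¹ ∈ relIdeal F R * relIdeal F ⊤ :=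
      mul_le_mul' le_rfl (relIdeal_mono le_top)
        (left_stable_mul (fun f a ha => of_mul_relIdeal ha f) _ (dd_mem_sq (inv_mem hy₁R')))
    exact Submodule.mul_mem_mul h1 (dd_mem hxS)
  have h5 : m • ((of ℤ F (x⁻¹ * y₂⁻¹ * y₁⁻¹) - of ℤ F (x₁⁻¹ * y⁻¹)) * dd y * dd x)
      ∈ relIdeal F R * relIdeal F ⊤ * relIdeal F S := by
    have hd : of ℤ F (x⁻¹ * y₂⁻¹ * y₁⁻¹) - of ℤ F (x₁⁻¹ * y⁻¹) ∈ relIdeal F R := by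
      have e : of ℤ F (x⁻¹ * y₂⁻¹ * y₁⁻¹) - of ℤ F (x₁⁻¹ * y⁻¹)
          = dd (x⁻¹ * y₂⁻¹ * y₁⁻¹) - dd (x₁⁻¹ * y⁻¹) := by
        simp only [dd]; exact (sub_sub_sub_cancel_right _ _ _).symm
      rw [e]
      exact sub_mem
        (dd_mem (R.mul_mem (R.mul_mem (inv_mem hxR) (inv_mem hy₂R)) (inv_mem hy₁R)))
        (dd_mem (R.mul_mem (inv_mem hx₁R) (inv_mem hyR)))
    exact nsmul_mem (Submodule.mul_mem_mul (Submodule.mul_mem_mul hd (dd_mem_top y))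
      (dd_mem hxS)) m
  -- final assembly
  have final : of ℤ F (x₁⁻¹ * y⁻¹ * x₁ * y) - of ℤ F (x⁻¹ * y₂⁻¹ * x * y₂)
      = (of ℤ F (x₁⁻¹ * y⁻¹) * dd x₁ * dd y
          - of ℤ F (x⁻¹ * y₂⁻¹) * dd x * dd y₂
          - (of ℤ F (x₁⁻¹ * y⁻¹) * dd y * dd x₁
              - m • (of ℤ F (x₁⁻¹ * y⁻¹) * dd y * dd x))
          + (of ℤ F (x⁻¹ * y₂⁻¹) * dd y₂ * dd x
              - m • (of ℤ F (x⁻¹ * y₂⁻¹ * y₁⁻¹) * dd y * dd x)))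
        + m • ((of ℤ F (x⁻¹ * y₂⁻¹ * y₁⁻¹) - of ℤ F (x₁⁻¹ * y⁻¹)) * dd y * dd x) := by
    have hsp : of ℤ F (x₁⁻¹ * y⁻¹ * x₁ * y) - of ℤ F (x⁻¹ * y₂⁻¹ * x * y₂)
        = (of ℤ F (x₁⁻¹ * y⁻¹ * x₁ * y) - 1) - (of ℤ F (x⁻¹ * y₂⁻¹ * x * y₂) - 1) :=
      (sub_sub_sub_cancel_right _ _ _).symm
    rw [hsp, hC1, hC2]
    exact final_id m _ _ _ _ _ _ _ _
  rw [final]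
  exact add_mem (add_mem (sub_mem (sub_mem hE1 hE3) hE2) hE4) h5
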